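/- arXiv:2309.01583 — 2 statements merged into one kernel-verified Lean document; each statement's English description precedes it below -/
import Mathlib

section
/- Let r ≥ 4 and let G be any spanning subgraph of the complete bipartite graph K_{2,r} on 2 + r vertices. Then χ_gb(G) ≤ 2 + ⌊(2+r)/2⌋ − 2 = ⌊(2+r)/2⌋. -/
open Function

namespace GameCol

variable {V : Type*} [Fintype V] [DecidableEq V]

/-- A finite set of vertices is independent in `G`. -/
def IsIndepF (G : SimpleGraph V) (s : Finset V) : Prop :=
  ∀ u ∈ s, ∀ v ∈ s, ¬ G.Adj u v

/-! ### The vertex colouring game.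

A position is a partial proper colouring `f : V → Option ℕ` (`none` = uncoloured);
the palette consists of the `k` colours `0, …, k-1`.  The `Bool` records whose turn
it is (`true` = Maker).  Players alternate, Maker moving first, always making a legal
move if one exists; the game ends when the player to move has no legal move, and
Maker wins if and only if the whole graph is then coloured. -/

/-- Colour `c` may legally be played at `v`. -/
def ColLegal (G : SimpleGraph V) (k : ℕ) (f : V → Option ℕ) (v : V) (c : ℕ) : Prop :=
  c < k ∧ f v = none ∧ ∀ u, G.Adj v u → f u ≠ some c

/-- Every vertex is coloured. -/
def FullC (f : V → Option ℕ) : Prop := ∀ v, f v ≠ none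

/-- Maker wins the vertex colouring game from the given position with optimal play
(`fuel` is an upper bound on the number of remaining moves). -/
def MakerWinsC (G : SimpleGraph V) (k : ℕ) : ℕ → (V → Option ℕ) → Bool → Prop
  | 0, f, _ => FullC f
  | fuel + 1, f, true => FullC f ∨
      ∃ v c, ColLegal G k f v c ∧ MakerWinsC G k fuel (update f v (some c)) false
  | fuel + 1, f, false => FullC f ∨
      ((∃ v c, ColLegal G k f v c) ∧
        ∀ v c, ColLegal G k f v c → MakerWinsC G k fuel (update f v (some c)) true)

/-- The game chromatic number `χ_g(G)`: the least number of colours for which Maker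
has a winning strategy in the vertex colouring game. -/
noncomputable def gameChromaticNumber (G : SimpleGraph V) : ℕ :=
  sInf {k | MakerWinsC G k (Fintype.card V) (fun _ => none) true}

/-! ### The vertex colouring game with blanks.

Positions are `f : V → Option (Option ℕ)`: `none` = unplayed, `some none` = blank,
`some (some c)` = coloured with colour `c`.  The palette is a finite set `K ⊆ ℕ` of
colours.  On her turn Maker must play a colour; on his turn Breaker may play a colour,
or a blank at any unplayed vertex.  The game ends as soon as no vertex can legally
receive a colour, and Maker wins iff every vertex is then coloured or blank. -/

/-- Colour `c` may legally be played at `v` (blanks put no restriction on their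
neighbours). -/
def BColLegal (G : SimpleGraph V) (K : Finset ℕ) (f : V → Option (Option ℕ))
    (v : V) (c : ℕ) : Prop :=
  c ∈ K ∧ f v = none ∧ ∀ u, G.Adj v u → f u ≠ some (some c)

/-- Every vertex is coloured or blank. -/
def AllPlayed (f : V → Option (Option ℕ)) : Prop := ∀ v, f v ≠ none

/-- Maker wins the vertex colouring game with blanks from the given position. -/
def MakerWinsB (G : SimpleGraph V) (K : Finset ℕ) :
    ℕ → (V → Option (Option ℕ)) → Bool → Prop
  | 0, f, _ => AllPlayed f
  | fuel + 1, f, true => AllPlayed f ∨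
      ∃ v c, BColLegal G K f v c ∧ MakerWinsB G K fuel (update f v (some (some c))) false
  | fuel + 1, f, false =>
      ((¬ ∃ v c, BColLegal G K f v c) ∧ AllPlayed f) ∨
      ((∃ v c, BColLegal G K f v c) ∧
        (∀ v c, BColLegal G K f v c →
          MakerWinsB G K fuel (update f v (some (some c))) true) ∧
        (∀ v, f v = none → MakerWinsB G K fuel (update f v (some none)) true))

/-- The game chromatic number with blanks `χ_gb(G)`: the least number of colours for
which Maker has a winning strategy in the vertex colouring game with blanks. -/
noncomputable def chiGb (G : SimpleGraph V) : ℕ :=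
  sInf {k | MakerWinsB G (Finset.range k) (Fintype.card V) (fun _ => none) true}

/-! ### The game with blanks, with classes marked for blanks.

The extra datum is the finite set `ds` of currently marked classes.  Maker may also
play blanks at unplayed vertices of marked classes; the game does not end while some
vertex of a marked class is unplayed; and whenever Breaker plays a blank at `v` he may
additionally remove one marked class not containing `v`. -/

/-- `v` belongs to some class marked for blanks. -/
def InMarked (ds : Finset (Finset V)) (v : V) : Prop := ∃ d ∈ ds, v ∈ d

/-- The game has ended: no colour move is available and no vertex of a class marked
for blanks is left unplayed. -/
def MEnded (G : SimpleGraph V) (K : Finset ℕ) (f : V → Option (Option ℕ))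
    (ds : Finset (Finset V)) : Prop :=
  (¬ ∃ v c, BColLegal G K f v c) ∧ ∀ v, InMarked ds v → f v ≠ none

/-- Maker wins the vertex colouring game with blanks, with the classes `ds` marked
for blanks, from the given position. -/
def MakerWinsM (G : SimpleGraph V) (K : Finset ℕ) :
    ℕ → (V → Option (Option ℕ)) → Finset (Finset V) → Bool → Prop
  | 0, f, _, _ => AllPlayed f
  | fuel + 1, f, ds, true =>
      (MEnded G K f ds ∧ AllPlayed f) ∨
      (¬ MEnded G K f ds ∧
        ((∃ v c, BColLegal G K f v c ∧
            MakerWinsM G K fuel (update f v (some (some c))) ds false) ∨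
         (∃ v, f v = none ∧ InMarked ds v ∧
            MakerWinsM G K fuel (update f v (some none)) ds false)))
  | fuel + 1, f, ds, false =>
      (MEnded G K f ds ∧ AllPlayed f) ∨
      (¬ MEnded G K f ds ∧
        (∀ v c, BColLegal G K f v c →
          MakerWinsM G K fuel (update f v (some (some c))) ds true) ∧
        (∀ v, f v = none →
          MakerWinsM G K fuel (update f v (some none)) ds true ∧
          ∀ d ∈ ds, v ∉ d →
            MakerWinsM G K fuel (update f v (some none)) (ds.erase d) true))

/-- `χ_gb(G; D₁,…,Dₛ)`: the least number of colours for which Maker has a winning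
strategy in the vertex colouring game with blanks with the classes in `ds` marked for
blanks. -/
noncomputable def chiGbM (G : SimpleGraph V) (ds : Finset (Finset V)) : ℕ :=
  sInf {k | MakerWinsM G (Finset.range k) (Fintype.card V) (fun _ => none) ds true}

/-! ### Move sequences, for conditioning the game on an initial sequence of plays. -/

/-- A move in the game with blanks: a colour at a vertex, or a blank at a vertex
together with an optional marked class which Breaker removes. -/
inductive BMove (W : Type*) where
  | color (v : W) (c : ℕ)
  | blank (v : W) (removed : Option (Finset W))
  deriving DecidableEq

/-- The vertex at which a move is made. -/
def BMove.vertex {W : Type*} : BMove W → W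
  | .color v _ => v
  | .blank v _ => v

/-- The effect of a single move on a position. -/
def bStep (st : (V → Option (Option ℕ)) × Finset (Finset V)) :
    BMove V → (V → Option (Option ℕ)) × Finset (Finset V)
  | .color v c => (update st.1 v (some (some c)), st.2)
  | .blank v none => (update st.1 v (some none), st.2)
  | .blank v (some d) => (update st.1 v (some none), st.2.erase d)

/-- The position reached after the sequence `P` of moves. -/
def bRun (st : (V → Option (Option ℕ)) × Finset (Finset V)) (P : List (BMove V)) :
    (V → Option (Option ℕ)) × Finset (Finset V) :=
  P.foldl bStep st

/-- `P` is a legal sequence of moves from the given position in the game with blanks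
with marked classes (the `Bool` is the player to move, `true` = Maker). -/
def LegalSeqM (G : SimpleGraph V) (K : Finset ℕ) :
    (V → Option (Option ℕ)) → Finset (Finset V) → Bool → List (BMove V) → Prop
  | _, _, _, [] => True
  | f, ds, true, BMove.color v c :: rest =>
      ¬ MEnded G K f ds ∧ BColLegal G K f v c ∧
        LegalSeqM G K (update f v (some (some c))) ds false rest
  | f, ds, true, BMove.blank v r :: rest =>
      ¬ MEnded G K f ds ∧ f v = none ∧ InMarked ds v ∧ r = none ∧
        LegalSeqM G K (update f v (some none)) ds false rest
  | f, ds, false, BMove.color v c :: rest =>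
      ¬ MEnded G K f ds ∧ BColLegal G K f v c ∧
        LegalSeqM G K (update f v (some (some c))) ds true rest
  | f, ds, false, BMove.blank v none :: rest =>
      ¬ MEnded G K f ds ∧ f v = none ∧
        LegalSeqM G K (update f v (some none)) ds true rest
  | f, ds, false, BMove.blank v (some d) :: rest =>
      ¬ MEnded G K f ds ∧ f v = none ∧ d ∈ ds ∧ v ∉ d ∧
        LegalSeqM G K (update f v (some none)) (ds.erase d) true rest

/-- `χ_gb(G; ds | P)`: the least number of colours for which Maker has a winning
strategy in the vertex colouring game with blanks with the classes `ds` marked for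
blanks, conditioned on the game starting with the sequence `P` of moves. -/
noncomputable def chiGbMCond (G : SimpleGraph V) (ds : Finset (Finset V))
    (P : List (BMove V)) : ℕ :=
  sInf {n | ∃ K : Finset ℕ, K.card = n ∧
    LegalSeqM G K (fun _ => none) ds true P ∧
    MakerWinsM G K (Fintype.card V - P.length) (bRun (fun _ => none, ds) P).1
      (bRun (fun _ => none, ds) P).2 (decide (P.length % 2 = 0))}

/-! ### The marking game. -/

/-- `v` may legally be marked: it is unmarked and has at most `k - 1` marked
neighbours. -/
def MarkLegal (G : SimpleGraph V) (k : ℕ) (M : Set V) (v : V) : Prop :=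
  v ∉ M ∧ (M ∩ {u | G.Adj v u}).ncard < k

/-- Maker wins the marking game from the given position. -/
def MakerWinsMark (G : SimpleGraph V) (k : ℕ) : ℕ → Set V → Bool → Prop
  | 0, M, _ => ∀ v, v ∈ M
  | fuel + 1, M, true => (∀ v, v ∈ M) ∨
      ∃ v, MarkLegal G k M v ∧ MakerWinsMark G k fuel (insert v M) false
  | fuel + 1, M, false => (∀ v, v ∈ M) ∨
      ((∃ v, MarkLegal G k M v) ∧
        ∀ v, MarkLegal G k M v → MakerWinsMark G k fuel (insert v M) true)

/-- The marking number (game colouring number) `m(G)`: the least `k` for which Maker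
has a winning strategy in the marking game. -/
noncomputable def markingNumber (G : SimpleGraph V) : ℕ :=
  sInf {k | MakerWinsMark G k (Fintype.card V) ∅ true}


open Sum

section Aux

private def colv (x : Option (Option ℕ)) : ℕ := (x.getD (some 3)).getD 3

private lemma exists_ne_ne (a b : ℕ) : ∃ c, c < 3 ∧ c ≠ a ∧ c ≠ b := by
  refine ⟨if a = 0 ∨ b = 0 then (if a = 1 ∨ b = 1 then 2 else 1) else 0, ?_⟩
  split_ifs <;> omega

private lemma count_update (f : V → Option (Option ℕ)) (v : V) (y : Option (Option ℕ))
    (hv : f v = none) (hy : y ≠ none) :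
    (Finset.univ.filter (fun u => update f v y u = none)).card
      = (Finset.univ.filter (fun u => f u = none)).card - 1 := by
  classical
  have hset : Finset.univ.filter (fun u => update f v y u = none)
      = (Finset.univ.filter (fun u => f u = none)).erase v := by
    ext u
    by_cases h : u = v <;> simp [Function.update_apply, h, hy, hv]
  rw [hset, Finset.card_erase_of_mem (by simp [hv])]

variable {r : ℕ} {G : SimpleGraph (Fin 2 ⊕ Fin r)}

private lemma adj_inr (hle : G ≤ completeBipartiteGraph (Fin 2) (Fin r)) {i : Fin r} {u}
    (h : G.Adj (inr i) u) : u = inl 0 ∨ u = inl 1 := by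
  have h2 := hle h
  simp [completeBipartiteGraph] at h2
  obtain ⟨j, rfl⟩ := Sum.isLeft_iff.mp h2
  fin_cases j
  · exact Or.inl rfl
  · exact Or.inr rfl

private lemma adj_inl (hle : G ≤ completeBipartiteGraph (Fin 2) (Fin r)) {j : Fin 2} {u}
    (h : G.Adj (inl j) u) : ∃ i, u = inr i := by
  have h2 := hle h
  simp [completeBipartiteGraph] at h2
  exact Sum.isRight_iff.mp h2

private lemma legal_exists (hle : G ≤ completeBipartiteGraph (Fin 2) (Fin r))
    {k : ℕ} (hk : 3 ≤ k) {f : Fin 2 ⊕ Fin r → Option (Option ℕ)}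
    (h0 : f (inl 0) ≠ none) (h1 : f (inl 1) ≠ none) {v} (hv : f v = none) :
    ∃ c, BColLegal G (Finset.range k) f v c := by
  obtain ⟨c, hc3, hca, hcb⟩ := exists_ne_ne (colv (f (inl 0))) (colv (f (inl 1)))
  rcases v with j | i
  · fin_cases j
    · exact absurd hv h0
    · exact absurd hv h1
  · refine ⟨c, Finset.mem_range.mpr (lt_of_lt_of_le hc3 hk), hv, ?_⟩
    intro u hu heq
    rcases adj_inr hle hu with rfl | rfl
    · exact hca (by rw [heq]; rfl)
    · exact hcb (by rw [heq]; rfl)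

private lemma invariant (hle : G ≤ completeBipartiteGraph (Fin 2) (Fin r))
    {k : ℕ} (hk : 3 ≤ k) :
    ∀ (fuel : ℕ) (f : Fin 2 ⊕ Fin r → Option (Option ℕ)) (b : Bool),
      f (inl 0) ≠ none → f (inl 1) ≠ none →
      (Finset.univ.filter (fun u => f u = none)).card ≤ fuel →
      MakerWinsB G (Finset.range k) fuel f b := by
  classical
  intro fuel
  induction fuel with
  | zero =>
    intro f b h0 h1 hcount
    have hemp : Finset.univ.filter (fun u => f u = none) = ∅ :=
      Finset.card_eq_zero.mp (Nat.le_zero.mp hcount)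
    show AllPlayed f
    intro v hv
    have := Finset.eq_empty_iff_forall_notMem.mp hemp v
    simp [hv] at this
  | succ n ih =>
    intro f b h0 h1 hcount
    have step : ∀ (v : Fin 2 ⊕ Fin r) (y : Option (Option ℕ)), f v = none → y ≠ none →
        ∀ b', MakerWinsB G (Finset.range k) n (update f v y) b' := by
      intro v y hfv hy b'
      have hv0 : (inl 0 : Fin 2 ⊕ Fin r) ≠ v := by rintro rfl; exact h0 hfv
      have hv1 : (inl 1 : Fin 2 ⊕ Fin r) ≠ v := by rintro rfl; exact h1 hfv
      have hmem : v ∈ Finset.univ.filter (fun u => f u = none) := by simp [hfv]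
      have hpos : 1 ≤ (Finset.univ.filter (fun u => f u = none)).card :=
        Finset.card_pos.mpr ⟨v, hmem⟩
      refine ih _ b' ?_ ?_ ?_
      · rw [Function.update_of_ne hv0]; exact h0
      · rw [Function.update_of_ne hv1]; exact h1
      · rw [count_update f v y hfv hy]; omega
    cases b
    · -- Breaker to move
      simp only [MakerWinsB]
      by_cases hall : AllPlayed f
      · exact Or.inl ⟨fun ⟨v, c, hleg⟩ => hall v hleg.2.1, hall⟩
      · right
        obtain ⟨v, hv⟩ : ∃ v, f v = none := by
          by_contra h; push_neg at h; exact hall h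
        obtain ⟨c, hc⟩ := legal_exists hle hk h0 h1 hv
        refine ⟨⟨v, c, hc⟩, ?_, ?_⟩
        · intro v' c' hleg'
          exact step v' _ hleg'.2.1 (by simp) true
        · intro v' hv'
          exact step v' _ hv' (by simp) true
    · -- Maker to move
      simp only [MakerWinsB]
      by_cases hall : AllPlayed f
      · exact Or.inl hall
      · right
        obtain ⟨v, hv⟩ : ∃ v, f v = none := by
          by_contra h; push_neg at h; exact hall h
        obtain ⟨c, hc⟩ := legal_exists hle hk h0 h1 hv
        exact ⟨v, c, hc, step v _ hv (by simp) false⟩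



end Aux

/-- For `r ≥ 4`, any spanning subgraph `G` of the complete bipartite
graph `K_{2,r}` satisfies `χ_gb(G) ≤ ⌊(2+r)/2⌋ = 2 + ⌊(2+r)/2⌋ − 2`. -/
theorem chiGb_le_of_subgraph_completeBipartite (r : ℕ) (hr : 4 ≤ r)
    (G : SimpleGraph (Fin 2 ⊕ Fin r))
    (hle : G ≤ completeBipartiteGraph (Fin 2) (Fin r)) :
    chiGb G ≤ (2 + r) / 2 := by
  classical
  obtain ⟨m, rfl⟩ : ∃ m, r = m + 4 := ⟨r - 4, by omega⟩
  set k := (2 + (m + 4)) / 2 with hkdef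
  have hk : 3 ≤ k := by omega
  set K := Finset.range k
  apply Nat.sInf_le
  show MakerWinsB G K (Fintype.card (Fin 2 ⊕ Fin (m + 4))) (fun _ => none) true
  have hcard : Fintype.card (Fin 2 ⊕ Fin (m + 4)) = m + 4 + 1 + 1 := by
    simp; omega
  rw [hcard]
  set f0 : Fin 2 ⊕ Fin (m + 4) → Option (Option ℕ) := fun _ => none with hf0
  set f1 := update f0 (inl 0) (some (some 0)) with hf1
  -- counts
  have hc0 : (Finset.univ.filter (fun u => f0 u = none)).card = m + 6 := by
    simp [hf0]; omega
  have hf1inl0 : f1 (inl 0) = some (some 0) := by simp [hf1]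
  have hc1 : (Finset.univ.filter (fun u => f1 u = none)).card = m + 5 := by
    rw [hf1, count_update f0 (inl 0) _ rfl (by simp), hc0]
    omega
  -- the key continuation after Breaker's reply
  have key : ∀ (v : Fin 2 ⊕ Fin (m + 4)) (y : Option (Option ℕ)),
      f1 v = none → y ≠ none → MakerWinsB G K (m + 4) (update f1 v y) true := by
    intro v y hfv hy
    have hv0 : (inl 0 : Fin 2 ⊕ Fin (m + 4)) ≠ v := by
      rintro rfl; rw [hf1inl0] at hfv; exact nomatch hfv
    set f2 := update f1 v y with hf2
    have h20 : f2 (inl 0) ≠ none := by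
      rw [hf2, Function.update_of_ne hv0, hf1inl0]; simp
    have hc2 : (Finset.univ.filter (fun u => f2 u = none)).card = m + 4 := by
      rw [hf2, count_update f1 v y hfv hy, hc1]
      omega
    by_cases h21 : f2 (inl 1) = none
    · -- Maker colours inl 1
      show MakerWinsB G K (m + 3 + 1) f2 true
      obtain ⟨c, hc3, hcy, -⟩ := exists_ne_ne (colv y) (colv y)
      have hleg : BColLegal G K f2 (inl 1) c := by
        refine ⟨Finset.mem_range.mpr (lt_of_lt_of_le hc3 hk), h21, ?_⟩
        intro u hu heq
        obtain ⟨i, rfl⟩ := adj_inl hle hu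
        have : f2 (inr i) = if (inr i : Fin 2 ⊕ Fin (m+4)) = v then y else none := by
          rw [hf2, hf1, Function.update_apply, Function.update_apply]
          split
          · rfl
          · rw [if_neg (by simp), hf0]
        rw [this] at heq
        split at heq
        · exact hcy (by rw [heq]; rfl)
        · exact nomatch heq
      refine Or.inr ⟨inl 1, c, hleg, invariant hle hk _ _ false ?_ ?_ ?_⟩
      · rw [Function.update_of_ne (by simp)]; exact h20
      · simp
      · rw [count_update f2 (inl 1) _ h21 (by simp), hc2]
        omega
    · exact invariant hle hk _ f2 true h20 h21 (le_of_eq hc2)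
  -- Maker's first move: colour inl 0 with 0
  show MakerWinsB G K (m + 4 + 1 + 1) f0 true
  refine Or.inr ⟨inl 0, 0, ⟨Finset.mem_range.mpr (by omega), rfl, fun u _ => by simp [hf0]⟩, ?_⟩
  show MakerWinsB G K (m + 4 + 1) f1 false
  have hex : ∃ v c, BColLegal G K f1 v c := by
    refine ⟨inl 1, 1, Finset.mem_range.mpr (by omega), ?_, ?_⟩
    · rw [hf1, Function.update_of_ne (by simp), hf0]
    · intro u hu heq
      obtain ⟨i, rfl⟩ := adj_inl hle hu
      rw [hf1, Function.update_of_ne (by simp), hf0] at heq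
      exact nomatch heq
  refine Or.inr ⟨hex, ?_, ?_⟩
  · intro v c hleg
    exact key v _ hleg.2.1 (by simp)
  · intro v hv
    exact key v _ hv (by simp)

end GameCol
end

section
/- For any r ≥ 1 and any subgraph H of the complete bipartite graph K_{2,r}, we have χ_gb(H) ≤ 3. -/
open Function

namespace GameCol

variable {V : Type*} [Fintype V] [DecidableEq V]

/-! ### Auxiliary machinery for Statement 9. -/

/-- Number of unplayed vertices. -/
def UC (g : V → Option (Option ℕ)) : ℕ :=
  (Finset.univ.filter (fun v => g v = none)).card

lemma UC_update (g : V → Option (Option ℕ)) (v : V) (x : Option ℕ) (hv : g v = none) :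
    UC (update g v (some x)) + 1 = UC g := by
  have h : Finset.univ.filter (fun u => update g v (some x) u = none)
      = (Finset.univ.filter (fun u => g u = none)).erase v := by
    ext u
    by_cases hu : u = v <;> simp [Function.update_apply, hu, hv]
  rw [UC, h, Finset.card_erase_add_one (by simp [hv])]
  rfl

lemma allPlayed_of_UC_eq_zero {g : V → Option (Option ℕ)} (h : UC g = 0) : AllPlayed g := by
  intro v hv
  have hmem : v ∈ Finset.univ.filter (fun u => g u = none) := by simp [hv]
  rw [UC, Finset.card_eq_zero] at h
  simp [h] at hmem

lemma UC_pos {g : V → Option (Option ℕ)} {v : V} (hv : g v = none) : 0 < UC g :=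
  Finset.card_pos.mpr ⟨v, by simp [hv]⟩

lemma exists_legal (G : SimpleGraph V) (g : V → Option (Option ℕ)) (v : V)
    (hv : g v = none) (S : Finset V) (hS : S.card ≤ 2)
    (hN : ∀ u, G.Adj v u → ∀ c : ℕ, g u = some (some c) → u ∈ S) :
    ∃ c, BColLegal G (Finset.range 3) g v c := by
  classical
  set F := (Finset.range 3).filter (fun c => ∃ u, G.Adj v u ∧ g u = some (some c)) with hF
  have hFcard : F.card ≤ S.card := by
    apply Finset.card_le_card_of_injOn
      (fun c => if h : ∃ u, G.Adj v u ∧ g u = some (some c) then h.choose else v)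
    · intro c hc
      rw [hF, Finset.mem_coe, Finset.mem_filter] at hc
      dsimp only
      rw [dif_pos hc.2]
      exact hN _ hc.2.choose_spec.1 c hc.2.choose_spec.2
    · intro c hc c' hc' hcc
      rw [hF, Finset.coe_filter, Set.mem_setOf_eq] at hc hc'
      dsimp only at hcc
      rw [dif_pos hc.2, dif_pos hc'.2] at hcc
      have h1 := hc.2.choose_spec.2
      have h2 := hc'.2.choose_spec.2
      rw [hcc, h2] at h1
      simpa using h1.symm
  have hlt : F.card < (Finset.range 3).card := by
    have := hFcard.trans hS
    simp only [Finset.card_range]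
    omega
  have hss : F ⊂ Finset.range 3 :=
    (Finset.ssubset_iff_subset_ne).2 ⟨Finset.filter_subset _ _, fun h => by simp [h] at hlt⟩
  obtain ⟨c, hc3, hcF⟩ := Finset.exists_of_ssubset hss
  refine ⟨c, hc3, hv, ?_⟩
  intro u hu hcon
  exact hcF (Finset.mem_filter.2 ⟨hc3, u, hu, hcon⟩)

/-- If all vertices of the (small) dominating set `L` have been played, Maker wins
with three colours. -/
lemma winsA (G : SimpleGraph V) (L : Finset V) (hL2 : L.card ≤ 2)
    (hadj : ∀ v u, v ∉ L → G.Adj v u → u ∈ L) :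
    ∀ n (g : V → Option (Option ℕ)) (b : Bool),
      (∀ w ∈ L, g w ≠ none) → UC g ≤ n → MakerWinsB G (Finset.range 3) n g b := by
  intro n
  induction n with
  | zero =>
    intro g b hLp hUC
    have hA : AllPlayed g := allPlayed_of_UC_eq_zero (Nat.le_zero.1 hUC)
    cases b <;> exact hA
  | succ n ih =>
    intro g b hLp hUC
    by_cases hAP : AllPlayed g
    · cases b
      · exact Or.inl ⟨fun ⟨v, c, h⟩ => hAP v h.2.1, hAP⟩
      · exact Or.inl hAP
    · unfold AllPlayed at hAP
      push_neg at hAP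
      obtain ⟨v, hv⟩ := hAP
      have hvL : v ∉ L := fun h => hLp v h hv
      obtain ⟨c, hc⟩ := exists_legal G g v hv L hL2
        (fun u hu c _ => hadj v u hvL hu)
      have hpres : ∀ (v' : V) (x : Option ℕ), g v' = none →
          ∀ w ∈ L, update g v' (some x) w ≠ none := by
        intro v' x _ w hw
        rcases eq_or_ne w v' with rfl | h
        · simp
        · simpa [Function.update_apply, h] using hLp w hw
      have hUC' : ∀ (v' : V) (x : Option ℕ), g v' = none →
          UC (update g v' (some x)) ≤ n := by
        intro v' x hv'
        have := UC_update g v' x hv'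
        omega
      cases b
      · refine Or.inr ⟨⟨v, c, hc⟩, ?_, ?_⟩
        · intro v' c' hc'
          exact ih _ true (hpres v' (some c') hc'.2.1) (hUC' v' (some c') hc'.2.1)
        · intro v' hv'
          exact ih _ true (hpres v' none hv') (hUC' v' none hv')
      · exact Or.inr ⟨v, c, hc, ih _ false (hpres v (some c) hv) (hUC' v (some c) hv)⟩

/-- For any `r ≥ 1` and any subgraph `H` of the complete bipartite
graph `K_{2,r}` (i.e. any graph embedding into `K_{2,r}` as a subgraph), we have
`χ_gb(H) ≤ 3`. -/
theorem chiGb_le_three_of_subgraph_K2r (r : ℕ) (hr : 1 ≤ r)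
    {W : Type*} [Fintype W] [DecidableEq W] (H : SimpleGraph W)
    (f : W ↪ (Fin 2 ⊕ Fin r))
    (hf : ∀ u v, H.Adj u v → (completeBipartiteGraph (Fin 2) (Fin r)).Adj (f u) (f v)) :
    chiGb H ≤ 3 := by
  classical
  have key : MakerWinsB H (Finset.range 3) (Fintype.card W) (fun _ => none) true := by
    set L : Finset W := Finset.univ.filter (fun v => (f v).isLeft) with hLdef
    have hmemL : ∀ v : W, v ∈ L ↔ (f v).isLeft := by
      intro v; simp [hLdef]
    have hL2 : L.card ≤ 2 := by
      have h := Finset.card_le_card_of_injOn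
        (fun v => Sum.elim id (fun _ => (0 : Fin 2)) (f v))
        (s := L) (t := (Finset.univ : Finset (Fin 2))) (fun a _ => Finset.mem_univ _) ?_
      · simpa using h
      · intro u hu w hw h
        simp only [Finset.coe_filter, Set.mem_setOf_eq, hLdef] at hu hw
        obtain ⟨a, ha⟩ := Sum.isLeft_iff.1 hu.2
        obtain ⟨b, hb⟩ := Sum.isLeft_iff.1 hw.2
        apply f.injective
        simp only [ha, hb, Sum.elim_inl, id_eq] at h
        rw [ha, hb, h]
    have hadj : ∀ v u, v ∉ L → H.Adj v u → u ∈ L := by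
      intro v u hv hvu
      have h := hf v u hvu
      rw [hmemL] at hv ⊢
      simp only [completeBipartiteGraph_adj] at h
      rcases h with ⟨h1, _⟩ | ⟨_, h2⟩
      · exact absurd h1 hv
      · exact h2
    have hnoLL : ∀ u w, u ∈ L → w ∈ L → ¬ H.Adj u w := by
      intro u w hu hw hadj'
      have h := hf u w hadj'
      rw [hmemL] at hu hw
      obtain ⟨a, ha⟩ := Sum.isLeft_iff.1 hu
      obtain ⟨b, hb⟩ := Sum.isLeft_iff.1 hw
      rw [ha, hb] at h
      simpa using h
    have hUC0 : UC (fun _ => none : W → Option (Option ℕ)) = Fintype.card W := by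
      simp [UC]
    rcases L.eq_empty_or_nonempty with hLe | ⟨a, ha⟩
    · exact winsA H L hL2 hadj _ _ true (by simp [hLe]) (le_of_eq hUC0)
    · have hNpos : 0 < Fintype.card W := Fintype.card_pos_iff.2 ⟨a⟩
      obtain ⟨m, hm⟩ := Nat.exists_eq_succ_of_ne_zero hNpos.ne'
      rw [hm]
      rw [MakerWinsB]
      refine Or.inr ⟨a, 0, ⟨by simp, rfl, fun u _ => by simp⟩, ?_⟩
      set g1 : W → Option (Option ℕ) :=
        update (fun _ => none) a (some (some 0)) with hg1
      have hg1a : g1 a = some (some 0) := by simp [hg1]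
      have hUC1 : UC g1 = m := by
        have := UC_update (fun _ => none : W → Option (Option ℕ)) a (some 0) rfl
        rw [← hg1, hUC0, hm] at this
        omega
      by_cases hb : ∃ b ∈ L, b ≠ a
      · obtain ⟨b, hbL, hba⟩ := hb
        have hg1b : g1 b = none := by simp [hg1, Function.update_apply, hba]
        have hm1 : 0 < m := hUC1 ▸ UC_pos hg1b
        obtain ⟨m', hm'⟩ := Nat.exists_eq_succ_of_ne_zero hm1.ne'
        -- facts about L
        have hLab : ∀ w ∈ L, w = a ∨ w = b := by
          intro w hw
          by_contra hcon
          push_neg at hcon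
          have hsub : ({a, b, w} : Finset W) ⊆ L := by
            intro x hx
            simp only [Finset.mem_insert, Finset.mem_singleton] at hx
            rcases hx with rfl | rfl | rfl <;> assumption
          have hc3 : ({a, b, w} : Finset W).card = 3 := by
            rw [Finset.card_insert_of_notMem (by simp [hba.symm, Ne.symm hcon.1]),
              Finset.card_insert_of_notMem (by simp [Ne.symm hcon.2]),
              Finset.card_singleton]
          have := Finset.card_le_card hsub
          omega
        have hbAdjCol : ∀ u c, H.Adj b u → g1 u = some (some c) → False := by
          intro u c hadj' hcol
          have hua : u = a := by
            by_contra hua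
            rw [hg1, Function.update_apply, if_neg hua] at hcol
            cases hcol
          exact hnoLL b a hbL (hua ▸ ha) (hua ▸ hadj')
        -- the response lemma
        have resp : ∀ (v : W) (x : Option ℕ), g1 v = none →
            MakerWinsB H (Finset.range 3) m' (update g1 v (some x)) true := by
          intro v x hv
          have hva : v ≠ a := fun h => by rw [h, hg1a] at hv; cases hv
          set g2 : W → Option (Option ℕ) := update g1 v (some x) with hg2
          have hg2a : g2 a ≠ none := by
            rw [hg2, Function.update_apply, if_neg (Ne.symm hva), hg1a]; simp
          have hUC2 : UC g2 = m' := by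
            have := UC_update g1 v x hv
            rw [← hg2] at this
            omega
          by_cases hg2b : g2 b = none
          · -- Maker colours b
            have hm2 : 0 < m' := hUC2 ▸ UC_pos hg2b
            obtain ⟨m'', hm''⟩ := Nat.exists_eq_succ_of_ne_zero hm2.ne'
            rw [hm'', MakerWinsB]
            have hN2 : ∀ u, H.Adj b u → ∀ c' : ℕ, g2 u = some (some c') → u ∈ ({v} : Finset W) := by
              intro u hu c' hcol
              rcases eq_or_ne u v with rfl | huv
              · simp
              · exfalso
                rw [hg2, Function.update_apply, if_neg huv] at hcol
                exact hbAdjCol u c' hu hcol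
            obtain ⟨c, hc⟩ := exists_legal H g2 b hg2b {v} (by simp) hN2
            refine Or.inr ⟨b, c, hc, ?_⟩
            apply winsA H L hL2 hadj
            · intro w hw
              rcases hLab w hw with rfl | rfl
              · have hab : w ≠ b := hba.symm
                rw [Function.update_apply, if_neg hab]
                exact hg2a
              · simp
            · have := UC_update g2 b (some c) hg2b
              omega
          · -- all of L is played
            apply winsA H L hL2 hadj
            · intro w hw
              rcases hLab w hw with rfl | rfl
              · exact hg2a
              · exact hg2b
            · exact le_of_eq hUC2
        rw [hm', MakerWinsB]
        refine Or.inr ⟨?_, ?_, ?_⟩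
        · obtain ⟨c, hc⟩ := exists_legal H g1 b hg1b ∅ (by simp)
            (fun u hu c hcol => absurd (hbAdjCol u c hu hcol) not_false)
          exact ⟨b, c, hc⟩
        · intro v c hc
          exact resp v (some c) hc.2.1
        · intro v hv
          exact resp v none hv
      · -- L ⊆ {a}
        push_neg at hb
        apply winsA H L hL2 hadj
        · intro w hw
          rw [hb w hw, hg1a]
          simp
        · exact le_of_eq hUC1
  have : (3 : ℕ) ∈ {k | MakerWinsB H (Finset.range k) (Fintype.card W)
      (fun _ => none) true} := key
  exact Nat.sInf_le this

end GameCol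
end
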